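/- arXiv:2603.02442 — 3 statements merged into one kernel-verified Lean document; each statement's English description precedes it below -/
import Mathlib

section
/- Let X be a Banach space and T a bounded linear operator on X. If T has no irregular vector (i.e., no x with liminf ||T^n x|| = 0 and limsup ||T^n x|| = ∞), then every vector x whose orbit (T^n x) has a subsequence converging to 0 satisfies T^n x → 0. -/
open Filter Topology

/-- If a bounded operator `T` on a Banach space has no irregular vector
(no `x` with `liminf ‖T^n x‖ = 0` and `limsup ‖T^n x‖ = ∞`), then every
vector whose orbit has a subsequence converging to `0` satisfies `T^n x → 0`. -/
theorem stmt0 {X : Type*} [NormedAddCommGroup X] [NormedSpace ℂ X] [CompleteSpace X]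
    (T : X →L[ℂ] X)
    (hno : ¬ ∃ x : X, Filter.liminf (fun n : ℕ => ‖(T ^ n) x‖) atTop = 0 ∧
      ¬ BddAbove (Set.range fun n : ℕ => ‖(T ^ n) x‖)) :
    ∀ x : X, (∃ φ : ℕ → ℕ, StrictMono φ ∧
        Tendsto (fun k => (T ^ (φ k)) x) atTop (𝓝 0)) →
      Tendsto (fun n => (T ^ n) x) atTop (𝓝 0) := by
  rintro x ⟨φ, hφ, hlim⟩
  -- the closed subspace generated by the orbit of `x`
  set S : Submodule ℂ X := Submodule.span ℂ (Set.range fun n : ℕ => (T ^ n) x) with hS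
  set Y : Submodule ℂ X := S.topologicalClosure with hYdef
  have hxY : ∀ n : ℕ, (T ^ n) x ∈ Y :=
    fun n => S.le_topologicalClosure (Submodule.subset_span ⟨n, rfl⟩)
  -- composition identity
  have hcomp : ∀ a b : ℕ, ∀ z : X, (T ^ a) ((T ^ b) z) = (T ^ (a + b)) z := by
    intro a b z
    rw [← ContinuousLinearMap.mul_apply, ← pow_add]
  by_cases hC : ∃ C : ℝ, ∀ n : ℕ, ∀ y ∈ Y, ‖(T ^ n) y‖ ≤ C * ‖y‖
  · -- uniformly bounded on Y : conclude convergence to 0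
    obtain ⟨C, hCb⟩ := hC
    have hC0 : 0 < max C 1 := lt_max_of_lt_right one_pos
    rw [Metric.tendsto_atTop]
    intro ε hε
    have hε' : 0 < ε / max C 1 := div_pos hε hC0
    obtain ⟨j, hj⟩ := (Metric.tendsto_atTop.1 hlim) (ε / max C 1) hε'
    refine ⟨φ j, fun m hm => ?_⟩
    have h1 : ‖(T ^ (φ j)) x‖ < ε / max C 1 := by
      have := hj j le_rfl
      rwa [dist_zero_right] at this
    have h2 : (T ^ (m - φ j)) ((T ^ (φ j)) x) = (T ^ m) x := by
      rw [hcomp, Nat.sub_add_cancel hm]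
    have h3 : ‖(T ^ m) x‖ ≤ C * ‖(T ^ (φ j)) x‖ := by
      rw [← h2]; exact hCb _ _ (hxY _)
    have h4 : C * ‖(T ^ (φ j)) x‖ ≤ max C 1 * ‖(T ^ (φ j)) x‖ :=
      mul_le_mul_of_nonneg_right (le_max_left _ _) (norm_nonneg _)
    rw [dist_zero_right]
    calc ‖(T ^ m) x‖ ≤ max C 1 * ‖(T ^ (φ j)) x‖ := h3.trans h4
      _ < max C 1 * (ε / max C 1) := by
          exact mul_lt_mul_of_pos_left h1 hC0
      _ = ε := by field_simp
  · -- not uniformly bounded on Y : produce an irregular vector, contradiction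
    exfalso
    push_neg at hC
    -- normalized form of unboundedness
    have hB : ∀ C : ℝ, ∃ n : ℕ, ∃ y : X, y ∈ Y ∧ ‖y‖ ≤ 1 ∧ C < ‖(T ^ n) y‖ := by
      intro C
      obtain ⟨n, y, hyY, hy⟩ := hC (max C 0)
      have hy0 : y ≠ 0 := by
        rintro rfl
        simp at hy
      have hny : (0:ℝ) < ‖y‖ := norm_pos_iff.2 hy0
      have hnr : ‖(Complex.ofReal ‖y‖⁻¹)‖ = ‖y‖⁻¹ := by
        rw [Complex.norm_real, Real.norm_eq_abs, abs_of_pos (inv_pos.2 hny)]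
      refine ⟨n, (Complex.ofReal ‖y‖⁻¹) • y, ?_, ?_, ?_⟩
      · exact Y.smul_mem _ hyY
      · rw [norm_smul, hnr, inv_mul_cancel₀ hny.ne']
      · have : ‖(T ^ n) ((Complex.ofReal ‖y‖⁻¹) • y)‖ = ‖y‖⁻¹ * ‖(T ^ n) y‖ := by
          rw [map_smul, norm_smul, hnr]
        rw [this]
        have h1 : max C 0 * ‖y‖ < ‖(T ^ n) y‖ := hy
        have h2 : max C 0 < ‖y‖⁻¹ * ‖(T ^ n) y‖ := by
          rw [lt_inv_mul_iff₀ hny]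
          linarith [h1, (mul_comm (max C 0) ‖y‖)]
        exact lt_of_le_of_lt (le_max_left C 0) h2
    -- Baire category setup on the complete space ↥Y
    haveI : CompleteSpace Y := IsClosed.completeSpace_coe (hs := S.isClosed_topologicalClosure)
    haveI : BaireSpace Y := BaireSpace.of_completelyPseudoMetrizable
    -- the two countable families of open dense sets
    set U : ℕ → Set Y := fun q => {y : Y | ∃ n : ℕ, (q : ℝ) < ‖(T ^ n) (y : X)‖} with hU
    set V : ℕ × ℕ → Set Y :=
      fun p => {y : Y | ∃ n : ℕ, p.2 ≤ n ∧ ‖(T ^ n) (y : X)‖ < 1 / (p.1 + 1)} with hV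
    have hcont : ∀ n : ℕ, Continuous fun y : Y => ‖(T ^ n) (y : X)‖ :=
      fun n => ((T ^ n).continuous.comp continuous_subtype_val).norm
    have hUopen : ∀ q, IsOpen (U q) := by
      intro q
      have : U q = ⋃ n : ℕ, {y : Y | (q : ℝ) < ‖(T ^ n) (y : X)‖} := by
        ext y; simp [hU, Set.mem_iUnion]
      rw [this]
      exact isOpen_iUnion fun n => isOpen_lt continuous_const (hcont n)
    have hVopen : ∀ p, IsOpen (V p) := by
      intro p
      have : V p = ⋃ n : ℕ, ⋃ _ : p.2 ≤ n, {y : Y | ‖(T ^ n) (y : X)‖ < 1 / (p.1 + 1)} := by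
        ext y; simp [hV, Set.mem_iUnion]
      rw [this]
      exact isOpen_iUnion fun n => isOpen_iUnion fun _ =>
        isOpen_lt (hcont n) continuous_const
    -- density of the U's
    have hUdense : ∀ q, Dense (U q) := by
      intro q
      rw [Metric.dense_iff]
      intro y₀ r hr
      by_cases h0 : ∃ n : ℕ, (q : ℝ) < ‖(T ^ n) (y₀ : X)‖
      · exact ⟨y₀, Metric.mem_ball_self hr, h0⟩
      · push_neg at h0
        obtain ⟨N, u, huY, hu1, huB⟩ := hB ((4 * q + 4) / r)
        refine ⟨⟨(y₀ : X) + (Complex.ofReal (r / 2)) • u,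
            Y.add_mem y₀.2 (Y.smul_mem _ huY)⟩, ?_, ?_⟩
        · rw [Metric.mem_ball, Subtype.dist_eq, dist_eq_norm]
          simp only [add_sub_cancel_left]
          rw [norm_smul]
          have : ‖(Complex.ofReal (r / 2))‖ = r / 2 := by
            rw [Complex.norm_real, Real.norm_eq_abs, abs_of_pos (by linarith)]
          rw [this]
          calc r / 2 * ‖u‖ ≤ r / 2 * 1 := by
                exact mul_le_mul_of_nonneg_left hu1 (by linarith)
            _ < r := by linarith
        · refine ⟨N, ?_⟩
          simp only [Set.mem_setOf_eq]
          have heq : (T ^ N) ((y₀ : X) + (Complex.ofReal (r / 2)) • u)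
              = (T ^ N) (y₀ : X) + (Complex.ofReal (r / 2)) • (T ^ N) u := by
            rw [map_add, map_smul]
          rw [heq]
          have h1 : ‖(Complex.ofReal (r / 2)) • (T ^ N) u‖ = r / 2 * ‖(T ^ N) u‖ := by
            rw [norm_smul, Complex.norm_real, Real.norm_eq_abs, abs_of_pos (by linarith)]
          have hkey : r / 2 * ((4 * (q:ℝ) + 4) / r) = 2 * q + 2 := by
            field_simp
            ring
          have h2 : 2 * (q:ℝ) + 2 < r / 2 * ‖(T ^ N) u‖ := by
            calc 2 * (q:ℝ) + 2 = r / 2 * ((4 * (q:ℝ) + 4) / r) := hkey.symm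
              _ < r / 2 * ‖(T ^ N) u‖ :=
                  mul_lt_mul_of_pos_left huB (by linarith)
          have h3 : ‖(T ^ N) (y₀ : X) + (Complex.ofReal (r / 2)) • (T ^ N) u‖
              ≥ ‖(Complex.ofReal (r / 2)) • (T ^ N) u‖ - ‖(T ^ N) (y₀ : X)‖ := by
            have := norm_sub_norm_le ((Complex.ofReal (r / 2)) • (T ^ N) u)
              (-(T ^ N) (y₀ : X))
            simpa [sub_neg_eq_add, add_comm] using this.trans (le_of_eq rfl)
          have h4 := h0 N
          rw [h1] at h3
          linarith
    -- span elements converge to 0 along φ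
    have hspan : ∀ w ∈ S, Tendsto (fun j => (T ^ (φ j)) w) atTop (𝓝 0) := by
      intro w hw
      induction hw using Submodule.span_induction with
      | mem w hw =>
        obtain ⟨k, rfl⟩ := hw
        have key : ∀ j, (T ^ (φ j)) ((T ^ k) x) = (T ^ k) ((T ^ (φ j)) x) := by
          intro j
          rw [hcomp, hcomp, add_comm]
        have := ((T ^ k).continuous.tendsto 0).comp hlim
        simp only [map_zero, Function.comp_def] at this
        exact (funext key) ▸ this
      | zero => simp only [map_zero]; exact tendsto_const_nhds
      | add a b _ _ ha hb =>
        have := ha.add hb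
        simpa using this
      | smul c a _ ha =>
        have := ha.const_smul c
        simpa [smul_zero] using this
    -- density of the V's
    have hVdense : ∀ p, Dense (V p) := by
      rintro ⟨k, N⟩
      rw [Metric.dense_iff]
      intro y₀ r hr
      have hy₀mem : (y₀ : X) ∈ closure (S : Set X) := by
        rw [← Submodule.topologicalClosure_coe]
        exact y₀.2
      obtain ⟨w, hwS, hwd⟩ := Metric.mem_closure_iff.1 hy₀mem r hr
      have hwY : w ∈ Y := S.le_topologicalClosure hwS
      have htend := hspan w hwS
      have h1k : (0:ℝ) < 1 / (k + 1) := by positivity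
      obtain ⟨j₀, hj₀⟩ := (Metric.tendsto_atTop.1 htend) (1 / (k + 1)) h1k
      set j := max j₀ N with hj
      refine ⟨⟨w, hwY⟩, ?_, ⟨φ j, ?_, ?_⟩⟩
      · rw [Metric.mem_ball, Subtype.dist_eq]
        rw [dist_comm] at hwd
        exact hwd
      · exact le_trans (le_max_right j₀ N) (hφ.le_apply)
      · have := hj₀ j (le_max_left j₀ N)
        rwa [dist_zero_right] at this
    -- apply Baire
    have hbaire :
        Dense (⋂ i : ℕ ⊕ (ℕ × ℕ), Sum.elim U V i) := by
      apply dense_iInter_of_isOpen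
      · rintro (q | p)
        · exact hUopen q
        · exact hVopen p
      · rintro (q | p)
        · exact hUdense q
        · exact hVdense p
    obtain ⟨y, hy⟩ := hbaire.nonempty
    have hyU : ∀ q : ℕ, ∃ n : ℕ, (q : ℝ) < ‖(T ^ n) (y : X)‖ := by
      intro q
      have := Set.mem_iInter.1 hy (Sum.inl q)
      exact this
    have hyV : ∀ k N : ℕ, ∃ n : ℕ, N ≤ n ∧ ‖(T ^ n) (y : X)‖ < 1 / (k + 1) := by
      intro k N
      have := Set.mem_iInter.1 hy (Sum.inr (k, N))
      exact this
    -- y is irregular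
    apply hno
    refine ⟨(y : X), ?_, ?_⟩
    · -- liminf = 0
      have hfreq : ∀ k : ℕ, ∃ᶠ n in atTop, ‖(T ^ n) (y : X)‖ ≤ 1 / (k + 1) := by
        intro k
        rw [Filter.frequently_atTop]
        intro N
        obtain ⟨n, hn, hlt⟩ := hyV k N
        exact ⟨n, hn, hlt.le⟩
      have hbdd : atTop.IsBoundedUnder (· ≥ ·) fun n : ℕ => ‖(T ^ n) (y : X)‖ :=
        Filter.isBoundedUnder_of ⟨0, fun n => norm_nonneg _⟩
      have hcob : atTop.IsCoboundedUnder (· ≥ ·) fun n : ℕ => ‖(T ^ n) (y : X)‖ :=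
        Filter.IsCoboundedUnder.of_frequently_le (a := 1) (by simpa using hfreq 0)
      have hge : (0:ℝ) ≤ liminf (fun n : ℕ => ‖(T ^ n) (y : X)‖) atTop :=
        Filter.le_liminf_of_le hcob (Filter.Eventually.of_forall fun n => norm_nonneg _)
      have hle : ∀ k : ℕ, liminf (fun n : ℕ => ‖(T ^ n) (y : X)‖) atTop ≤ 1 / (k + 1) :=
        fun k => Filter.liminf_le_of_frequently_le (hfreq k) hbdd
      refine le_antisymm ?_ hge
      by_contra hpos
      push_neg at hpos
      obtain ⟨k, hk⟩ := exists_nat_one_div_lt hpos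
      exact absurd (hle k) (not_le.2 (by exact_mod_cast hk))
    · -- unbounded
      rintro ⟨b, hb⟩
      obtain ⟨q, hq⟩ := exists_nat_ge b
      obtain ⟨n, hn⟩ := hyU q
      have : ‖(T ^ n) (y : X)‖ ≤ b := hb ⟨n, rfl⟩
      linarith [hq.trans hn.le]
end

section
/- Let X be a Banach space and T a bounded linear operator on X. If T has no irregular vector, then the set NS(T) = {x ∈ X : some subsequence of (T^n x) converges to 0} is a linear subspace of X. -/
open Filter Topology

/-- Key lemma: if `T` has no irregular vector and some subsequence of `(T^n x)` tends to `0`,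
then the whole orbit tends to `0`. -/
theorem aux_full_tendsto {X : Type*} [NormedAddCommGroup X] [NormedSpace ℂ X] [CompleteSpace X]
    (T : X →L[ℂ] X)
    (hno : ¬ ∃ x : X, Filter.liminf (fun n : ℕ => ‖(T ^ n) x‖) atTop = 0 ∧
      ¬ BddAbove (Set.range fun n : ℕ => ‖(T ^ n) x‖))
    (x : X) (φ : ℕ → ℕ) (hφ : StrictMono φ)
    (hlim : Tendsto (fun k => (T ^ (φ k)) x) atTop (𝓝 0)) :
    Tendsto (fun n => (T ^ n) x) atTop (𝓝 0) := by
  set s : Set X := Set.range fun n : ℕ => (T ^ n) x with hs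
  set Z : Submodule ℂ X := (Submodule.span ℂ s).topologicalClosure with hZ
  have hZclosed : IsClosed (Z : Set X) := Submodule.isClosed_topologicalClosure _
  haveI : CompleteSpace Z := hZclosed.completeSpace_coe
  -- every element of the (non-closed) span tends to 0 along φ
  have hspan : ∀ v ∈ Submodule.span ℂ s, Tendsto (fun k => (T ^ (φ k)) v) atTop (𝓝 0) := by
    intro v hv
    induction hv using Submodule.span_induction with
    | mem v hv =>
      obtain ⟨m, rfl⟩ := hv
      have hc : ∀ k, (T ^ φ k) ((T ^ m) x) = (T ^ m) ((T ^ φ k) x) := by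
        intro k
        rw [← ContinuousLinearMap.mul_apply, ← ContinuousLinearMap.mul_apply, ← pow_add,
          ← pow_add, Nat.add_comm]
      simp only [hc]
      have := ((T ^ m).continuous.tendsto 0).comp hlim
      simpa [Function.comp_def] using this
    | zero => simpa using tendsto_const_nhds
    | add v w hv hw ihv ihw =>
      have := ihv.add ihw
      simpa [map_add] using this
    | smul a v hv ih =>
      have := ih.const_smul a
      simpa [map_smul] using this
  by_cases hC : ∃ C : ℝ, ∀ w ∈ Z, ∀ n : ℕ, ‖(T ^ n) w‖ ≤ C * ‖w‖
  · -- powers of T uniformly bounded on Z: orbit of x tends to 0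
    obtain ⟨C, hC⟩ := hC
    set C' : ℝ := max C 0 + 1 with hC'
    have hC'pos : 0 < C' := by positivity
    have hCle : C ≤ C' := by
      have := le_max_left C 0
      rw [hC']; linarith
    rw [NormedAddCommGroup.tendsto_nhds_zero]
    intro ε hε
    have : ∀ᶠ k in atTop, ‖(T ^ φ k) x‖ < ε / C' :=
      (NormedAddCommGroup.tendsto_nhds_zero.mp hlim) _ (by positivity)
    obtain ⟨k, hk⟩ := this.exists
    filter_upwards [eventually_ge_atTop (φ k)] with n hn
    have hmem : (T ^ φ k) x ∈ Z :=
      Submodule.le_topologicalClosure _ (Submodule.subset_span ⟨φ k, rfl⟩)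
    have heq : (T ^ n) x = (T ^ (n - φ k)) ((T ^ φ k) x) := by
      rw [← ContinuousLinearMap.mul_apply, ← pow_add, Nat.sub_add_cancel hn]
    calc ‖(T ^ n) x‖ = ‖(T ^ (n - φ k)) ((T ^ φ k) x)‖ := by rw [heq]
      _ ≤ C * ‖(T ^ φ k) x‖ := hC _ hmem _
      _ ≤ C' * ‖(T ^ φ k) x‖ := by
          exact mul_le_mul_of_nonneg_right hCle (norm_nonneg _)
      _ < C' * (ε / C') := by exact (mul_lt_mul_iff_right₀ hC'pos).2 hk
      _ = ε := by field_simp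
  · -- unbounded case: Baire category gives an irregular vector, contradiction
    exfalso
    set A : ℕ → Set Z := fun j => {w : Z | ∃ n : ℕ, (j : ℝ) < ‖(T ^ n) (w : X)‖} with hA
    set B : ℕ → Set Z := fun j =>
      {w : Z | ∃ n : ℕ, j ≤ n ∧ ‖(T ^ n) (w : X)‖ < 1 / (j + 1)} with hB
    have hnormcont : ∀ n : ℕ, Continuous fun w : Z => ‖(T ^ n) (w : X)‖ :=
      fun n => ((T ^ n).continuous.comp continuous_subtype_val).norm
    have hAopen : ∀ j, IsOpen (A j) := by
      intro j
      have : A j = ⋃ n : ℕ, {w : Z | (j : ℝ) < ‖(T ^ n) (w : X)‖} := by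
        ext w; simp [hA]
      rw [this]
      exact isOpen_iUnion fun n => isOpen_lt continuous_const (hnormcont n)
    have hBopen : ∀ j, IsOpen (B j) := by
      intro j
      have : B j = ⋃ n : ℕ, ⋃ _ : j ≤ n, {w : Z | ‖(T ^ n) (w : X)‖ < 1 / (j + 1)} := by
        ext w; simp [hB]
      rw [this]
      exact isOpen_iUnion fun n => isOpen_iUnion fun _ =>
        isOpen_lt (hnormcont n) continuous_const
    have hBdense : ∀ j, Dense (B j) := by
      intro j
      rw [Metric.dense_iff]
      intro w r hr
      have hwcl : (w : X) ∈ closure (Submodule.span ℂ s : Set X) := by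
        have h2 : (w : X) ∈ ((Submodule.span ℂ s).topologicalClosure : Set X) := w.2
        rwa [Submodule.topologicalClosure_coe] at h2
      obtain ⟨v, hv, hdist⟩ := Metric.mem_closure_iff.mp hwcl r hr
      have hvZ : v ∈ Z := Submodule.le_topologicalClosure _ hv
      refine ⟨⟨v, hvZ⟩, ?_, ?_⟩
      · exact Metric.mem_ball.mpr (by rw [Subtype.dist_eq, dist_comm]; exact hdist)
      · have hpos : (0 : ℝ) < 1 / (j + 1) := by positivity
        have h1 : ∀ᶠ k in atTop, ‖(T ^ φ k) v‖ < 1 / (j + 1) :=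
          (NormedAddCommGroup.tendsto_nhds_zero.mp (hspan v hv)) _ hpos
        obtain ⟨k, hkj, hksmall⟩ := (eventually_ge_atTop j).and h1 |>.exists
        exact ⟨φ k, le_trans hkj hφ.le_apply, hksmall⟩
    have hAdense : ∀ j, Dense (A j) := by
      intro j
      by_contra hnd
      rw [Metric.dense_iff] at hnd
      push_neg at hnd
      obtain ⟨w₀, r, hr, hball⟩ := hnd
      have hbound : ∀ w : Z, dist w w₀ < r → ∀ n : ℕ, ‖(T ^ n) (w : X)‖ ≤ j := by
        intro w hw n
        by_contra hgt
        push_neg at hgt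
        exact Set.eq_empty_iff_forall_notMem.mp hball w ⟨Metric.mem_ball.mpr hw, n, hgt⟩
      apply hC
      refine ⟨4 * (j + 1) / r, ?_⟩
      intro w hwZ n
      rcases eq_or_ne w 0 with rfl | hw0
      · simp
      · have hwn : (0 : ℝ) < ‖w‖ := norm_pos_iff.mpr hw0
        set t : ℝ := (r / 2) / ‖w‖ with ht
        have htpos : 0 < t := by positivity
        set u : Z := w₀ + (t : ℂ) • ⟨w, hwZ⟩ with hu
        have hdu : dist u w₀ < r := by
          rw [dist_eq_norm]
          have : u - w₀ = (t : ℂ) • (⟨w, hwZ⟩ : Z) := by rw [hu]; abel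
          rw [this]
          have : ‖(t : ℂ) • (⟨w, hwZ⟩ : Z)‖ = t * ‖w‖ := by
            rw [norm_smul]
            simp [abs_of_pos htpos]
          rw [this, ht]
          rw [div_mul_cancel₀ _ (ne_of_gt hwn)]
          linarith
        have h1 : ‖(T ^ n) ((u : Z) : X)‖ ≤ j := hbound u hdu n
        have h2 : ‖(T ^ n) ((w₀ : Z) : X)‖ ≤ j := hbound w₀ (by simp [hr]) n
        have hux : ((u : Z) : X) = (w₀ : X) + (t : ℂ) • w := by simp [hu]
        have hkey : (T ^ n) ((t : ℂ) • w) = (T ^ n) ((u : Z) : X) - (T ^ n) ((w₀ : Z) : X) := by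
          rw [hux, map_add]; abel
        have h3 : t * ‖(T ^ n) w‖ ≤ 2 * j := by
          have : ‖(T ^ n) ((t : ℂ) • w)‖ ≤ 2 * j := by
            rw [hkey]
            calc ‖(T ^ n) ((u : Z) : X) - (T ^ n) ((w₀ : Z) : X)‖
                ≤ ‖(T ^ n) ((u : Z) : X)‖ + ‖(T ^ n) ((w₀ : Z) : X)‖ := norm_sub_le _ _
              _ ≤ 2 * j := by linarith
          rwa [map_smul, norm_smul, Complex.norm_real, Real.norm_eq_abs,
            abs_of_pos htpos] at this
        have h4 : r * ‖(T ^ n) w‖ ≤ 4 * j * ‖w‖ := by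
          rw [ht, div_div, div_mul_eq_mul_div,
            div_le_iff₀ (by positivity : (0:ℝ) < 2 * ‖w‖)] at h3
          nlinarith
        rw [div_mul_eq_mul_div, le_div_iff₀ hr]
        nlinarith [norm_nonneg w, norm_nonneg ((T ^ n) w)]
    -- Baire
    haveI : Nonempty Z := ⟨0⟩
    haveI : BaireSpace Z := inferInstance
    have hdense : Dense (⋂ i : ℕ ⊕ ℕ, Sum.elim A B i) := by
      apply dense_iInter_of_isOpen
      · rintro (j | j)
        · exact hAopen j
        · exact hBopen j
      · rintro (j | j)
        · exact hAdense j
        · exact hBdense j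
    obtain ⟨w, hw⟩ := hdense.nonempty
    have hwA : ∀ j : ℕ, w ∈ A j := fun j => Set.mem_iInter.mp hw (Sum.inl j)
    have hwB : ∀ j : ℕ, w ∈ B j := fun j => Set.mem_iInter.mp hw (Sum.inr j)
    apply hno
    refine ⟨(w : X), ?_, ?_⟩
    · -- liminf = 0
      have hbd : IsBoundedUnder (· ≥ ·) atTop (fun n : ℕ => ‖(T ^ n) (w : X)‖) :=
        ⟨0, by
          simp only [eventually_map, ge_iff_le]
          exact Filter.Eventually.of_forall fun n => norm_nonneg _⟩
      have hfreq1 : ∃ᶠ n in atTop, ‖(T ^ n) (w : X)‖ ≤ 1 := by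
        rw [frequently_atTop]
        intro a
        obtain ⟨n, hn, hlt⟩ := hwB a
        refine ⟨n, hn, le_trans hlt.le ?_⟩
        rw [div_le_one (by positivity)]
        linarith [Nat.cast_nonneg (α := ℝ) a]
      have hcob : IsCoboundedUnder (· ≥ ·) atTop (fun n : ℕ => ‖(T ^ n) (w : X)‖) :=
        Filter.IsCoboundedUnder.of_frequently_le hfreq1
      refine le_antisymm ?_ (le_liminf_of_le hcob
        (Filter.Eventually.of_forall fun n => norm_nonneg _))
      refine le_of_forall_pos_le_add ?_
      intro ε hε
      rw [zero_add]
      obtain ⟨j, hj⟩ := exists_nat_gt (1 / ε)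
      have hfreq : ∃ᶠ n in atTop, ‖(T ^ n) (w : X)‖ ≤ ε := by
        rw [frequently_atTop]
        intro a
        obtain ⟨n, hn, hlt⟩ := hwB (max a j)
        refine ⟨n, le_trans (le_max_left a j) hn, le_trans hlt.le ?_⟩
        have hjle : (j : ℝ) ≤ max a j := by exact_mod_cast Nat.cast_le.mpr (le_max_right a j)
        have : 1 / ε < (max a j : ℕ) + 1 := by
          push_cast
          calc (1 : ℝ) / ε < j := hj
            _ ≤ max (a : ℝ) j := by push_cast at hjle ⊢; linarith
            _ ≤ max (a : ℝ) j + 1 := by linarith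
        rw [div_le_iff₀ (by positivity)]
        rw [div_lt_iff₀ hε] at this
        push_cast
        push_cast at this
        nlinarith
      exact liminf_le_of_frequently_le hfreq hbd
    · -- unbounded
      rintro ⟨c, hc⟩
      obtain ⟨j, hj⟩ := exists_nat_gt c
      obtain ⟨n, hn⟩ := hwA j
      have : ‖(T ^ n) (w : X)‖ ≤ c := hc ⟨n, rfl⟩
      linarith

/-- If `T` has no irregular vector, then
`NS(T) = {x : some subsequence of (T^n x) converges to 0}` is a linear subspace. -/
theorem stmt1 {X : Type*} [NormedAddCommGroup X] [NormedSpace ℂ X] [CompleteSpace X]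
    (T : X →L[ℂ] X)
    (hno : ¬ ∃ x : X, Filter.liminf (fun n : ℕ => ‖(T ^ n) x‖) atTop = 0 ∧
      ¬ BddAbove (Set.range fun n : ℕ => ‖(T ^ n) x‖)) :
    ∃ S : Submodule ℂ X, (S : Set X) =
      {x : X | ∃ φ : ℕ → ℕ, StrictMono φ ∧
        Tendsto (fun k => (T ^ (φ k)) x) atTop (𝓝 0)} := by
  refine ⟨{ carrier := {x : X | Tendsto (fun n => (T ^ n) x) atTop (𝓝 0)}
            add_mem' := ?_
            zero_mem' := ?_
            smul_mem' := ?_ }, ?_⟩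
  · intro a b ha hb
    have := ha.add hb
    simpa [map_add] using this
  · simpa using (tendsto_const_nhds : Tendsto (fun _ : ℕ => (0 : X)) atTop (𝓝 0))
  · intro c a ha
    have := ha.const_smul c
    have := this.congr fun n => (map_smul (T ^ n) c a).symm
    rw [smul_zero] at this
    exact this
  · ext x
    constructor
    · intro hx
      exact ⟨id, strictMono_id, hx⟩
    · rintro ⟨φ, hφ, hlim⟩
      exact aux_full_tendsto T hno x φ hφ hlim
end

section
/- Let X be a Banach space and T a bounded linear operator. If X is the closure of the span of NS(T), NS(T) is residual in X, and T is not power bounded, then T has an irregular vector. -/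
open Filter Topology

/-- If `X` is the closed linear span of `NS(T)`, `NS(T)` is residual, and `T` is not
power bounded, then `T` has an irregular vector. -/
theorem stmt2 {X : Type*} [NormedAddCommGroup X] [NormedSpace ℂ X] [CompleteSpace X]
    (T : X →L[ℂ] X)
    (NS : Set X)
    (hNS : NS = {x : X | ∃ φ : ℕ → ℕ, StrictMono φ ∧
        Tendsto (fun k => (T ^ (φ k)) x) atTop (𝓝 0)})
    (hspan : closure ((Submodule.span ℂ NS : Submodule ℂ X) : Set X) = Set.univ)
    (hres : NS ∈ residual X)
    (hpb : ¬ ∃ C : ℝ, ∀ n : ℕ, ‖T ^ n‖ ≤ C) :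
    ∃ x : X, Filter.liminf (fun n : ℕ => ‖(T ^ n) x‖) atTop = 0 ∧
      ¬ BddAbove (Set.range fun n : ℕ => ‖(T ^ n) x‖) := by
  set F : ℕ → Set X := fun m => {x : X | ∀ n : ℕ, ‖(T ^ n) x‖ ≤ m} with hF
  have hFclosed : ∀ m, IsClosed (F m) := by
    intro m
    have : F m = ⋂ n : ℕ, (fun x : X => ‖(T ^ n) x‖) ⁻¹' Set.Iic (m : ℝ) := by
      ext x; simp [hF]
    rw [this]
    exact isClosed_iInter fun n =>
      IsClosed.preimage ((T ^ n).continuous.norm) isClosed_Iic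
  have hFint : ∀ m, interior (F m) = ∅ := by
    intro m
    by_contra h
    obtain ⟨x₀, hx₀⟩ := Set.nonempty_iff_ne_empty.2 h
    obtain ⟨ε, hε, hball⟩ := Metric.isOpen_iff.1 isOpen_interior x₀ hx₀
    have hx₀F : x₀ ∈ F m := interior_subset hx₀
    have hm : (0 : ℝ) ≤ m := le_trans (norm_nonneg _) (hx₀F 0)
    -- for y in ball 0 ε, ‖T^n y‖ ≤ 2m
    have key : ∀ n : ℕ, ∀ y : X, ‖y‖ < ε → ‖(T ^ n) y‖ ≤ 2 * m := by
      intro n y hy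
      have h1 : x₀ + y ∈ F m := by
        apply interior_subset; apply hball
        simp [Metric.mem_ball, dist_eq_norm, hy]
      have h2 : ‖(T ^ n) (x₀ + y)‖ ≤ m := h1 n
      have h3 : ‖(T ^ n) x₀‖ ≤ m := hx₀F n
      have : (T ^ n) y = (T ^ n) (x₀ + y) - (T ^ n) x₀ := by
        rw [map_add]; abel
      rw [this]
      calc ‖(T ^ n) (x₀ + y) - (T ^ n) x₀‖ ≤ ‖(T ^ n) (x₀ + y)‖ + ‖(T ^ n) x₀‖ :=
            norm_sub_le _ _
        _ ≤ 2 * m := by linarith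
    apply hpb
    refine ⟨4 * m / ε, fun n => ?_⟩
    have hC : (0 : ℝ) ≤ 4 * m / ε := by positivity
    refine ContinuousLinearMap.opNorm_le_of_shell (f := T ^ n) hε hC
      (c := (2 : ℂ)) (by norm_num) (fun y hy1 hy2 => ?_)
    have hy1' : ε / 2 ≤ ‖y‖ := by simpa using hy1
    calc ‖(T ^ n) y‖ ≤ 2 * m := key n y hy2
      _ = (4 * m / ε) * (ε / 2) := by field_simp; ring
      _ ≤ (4 * m / ε) * ‖y‖ := by gcongr
  -- the set of vectors with unbounded orbit is residual
  have hE : (⋂ m : ℕ, (F m)ᶜ) ∈ residual X := by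
    refine countable_iInter_mem.2 fun m => ?_
    refine mem_residual.2 ⟨(F m)ᶜ, subset_rfl, (hFclosed m).isOpen_compl.isGδ, ?_⟩
    rw [← interior_eq_empty_iff_dense_compl]
    exact hFint m
  have hmem : (NS ∩ ⋂ m : ℕ, (F m)ᶜ).Nonempty := by
    have := dense_of_mem_residual (inter_mem hres hE)
    exact this.nonempty
  obtain ⟨x, hxNS, hxE⟩ := hmem
  rw [hNS] at hxNS
  obtain ⟨φ, hφ, hlim⟩ := hxNS
  refine ⟨x, ?_, ?_⟩
  · -- liminf = 0
    have hbdd : IsBoundedUnder (· ≥ ·) atTop (fun n : ℕ => ‖(T ^ n) x‖) :=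
      ⟨0, Filter.eventually_map.2 (Filter.Eventually.of_forall fun n => norm_nonneg _)⟩
    have hfreq : ∀ ε : ℝ, 0 < ε → ∃ᶠ n in atTop, ‖(T ^ n) x‖ ≤ ε := by
      intro ε hε
      have hev : ∀ᶠ k in atTop, ‖(T ^ (φ k)) x‖ ≤ ε := by
        have := hlim.norm
        simp only [norm_zero] at this
        exact this.eventually_le_const hε
      exact (hφ.tendsto_atTop).frequently hev.frequently
    have hub : ∀ ε : ℝ, 0 < ε →
        Filter.liminf (fun n : ℕ => ‖(T ^ n) x‖) atTop ≤ ε := fun ε hε =>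
      Filter.liminf_le_of_frequently_le (hfreq ε hε) hbdd
    have hlb : 0 ≤ Filter.liminf (fun n : ℕ => ‖(T ^ n) x‖) atTop := by
      have hcb : IsCoboundedUnder (· ≥ ·) atTop (fun n : ℕ => ‖(T ^ n) x‖) :=
        Filter.IsCobounded.of_frequently_le
          (Filter.frequently_map.2 (hfreq 1 one_pos))
      exact Filter.le_liminf_of_le hcb
        (Filter.Eventually.of_forall fun n => norm_nonneg _)
    have := le_antisymm (le_of_forall_pos_le_add (fun ε hε => by simpa using hub ε hε)) hlb
    linarith [this]
  · -- unbounded orbit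
    rintro ⟨b, hb⟩
    have hx : ∀ m : ℕ, ∃ n : ℕ, (m : ℝ) < ‖(T ^ n) x‖ := by
      intro m
      have := Set.mem_iInter.1 hxE m
      simp only [Set.mem_compl_iff, hF, Set.mem_setOf_eq, not_forall] at this
      obtain ⟨n, hn⟩ := this
      exact ⟨n, lt_of_not_ge hn⟩
    obtain ⟨n, hn⟩ := hx (⌈b⌉₊)
    have : ‖(T ^ n) x‖ ≤ b := hb ⟨n, rfl⟩
    have : (⌈b⌉₊ : ℝ) < b := lt_of_lt_of_le hn this
    exact absurd this (not_lt.2 (Nat.le_ceil b))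
end
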